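/- Let H be the 10×10 block matrix [[C_4, u, 0],[0, 0, vᵀ],[0, 0, C_5]], where u is a nonzero 0-1 column vector of length 4 and v is a nonzero 0-1 column vector of length 5, and suppose u or v has more than one nonzero entry. Then H^{21} has an entry greater than 1; in particular θ(H) ≤ 20 < g(10). -/
import Mathlib


/-- A matrix over ℕ is a 0-1 matrix iff all its entries are at most 1. -/
def IsZO {α β : Type*} (A : Matrix α β ℕ) : Prop := ∀ i j, A i j ≤ 1

/-- The stable index of a 0-1 matrix: the smallest positive `k` with `A ^ (k+1)`
not a 0-1 matrix, or `⊤` if no such `k` exists. -/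
noncomputable def theta {α : Type*} [Fintype α] [DecidableEq α]
    (A : Matrix α α ℕ) : ℕ∞ :=
  sInf ((fun k : ℕ => (k : ℕ∞)) '' {k : ℕ | 1 ≤ k ∧ ¬ IsZO (A ^ (k + 1))})

/-- `g(n)` from the paper. -/
def g (n : ℕ) : ℕ :=
  if n % 2 = 1 then (n ^ 2 - 1) / 4
  else if n % 4 = 0 then (n ^ 2 - 4) / 4
  else (n ^ 2 - 16) / 4

/-- Basic circulant 0-1 matrix of order `n`. -/
def Cmat (n : ℕ) : Matrix (Fin n) (Fin n) ℕ :=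
  Matrix.of fun i j => if (j : ℕ) = ((i : ℕ) + 1) % n then 1 else 0

/-- Condition (★) on `(n, p, q)`. -/
def StarCond (n p q : ℕ) : Prop :=
  p + q = n ∧
  ((n % 2 = 1 ∧ ({p, q} : Finset ℕ) = {(n + 1) / 2, (n - 1) / 2}) ∨
   (n % 4 = 0 ∧ ({p, q} : Finset ℕ) = {(n + 2) / 2, (n - 2) / 2}) ∨
   (n % 4 = 2 ∧ ({p, q} : Finset ℕ) = {(n + 4) / 2, (n - 4) / 2}))

/-- The block matrix `[[C_p, u, 0], [0, 0, vᵀ], [0, 0, C_q]]`. -/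
def Hmat (p q : ℕ) (u : Fin p → ℕ) (v : Fin q → ℕ) :
    Matrix (Fin p ⊕ Unit ⊕ Fin q) (Fin p ⊕ Unit ⊕ Fin q) ℕ :=
  Matrix.of fun i j =>
    match i, j with
    | Sum.inl a, Sum.inl b => Cmat p a b
    | Sum.inl a, Sum.inr (Sum.inl _) => u a
    | Sum.inr (Sum.inl _), Sum.inr (Sum.inr b) => v b
    | Sum.inr (Sum.inr a), Sum.inr (Sum.inr b) => Cmat q a b
    | _, _ => 0

lemma rowL (u : Fin 4 → ℕ) (v : Fin 5 → ℕ) (i j : Fin 4)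
    (hij : (j : ℕ) = ((i : ℕ) + 1) % 4)
    (B : Matrix (Fin 4 ⊕ Unit ⊕ Fin 5) (Fin 4 ⊕ Unit ⊕ Fin 5) ℕ)
    (c : Fin 4 ⊕ Unit ⊕ Fin 5) :
    (Hmat 4 5 u v * B) (Sum.inl i) c
      = B (Sum.inl j) c + u i * B (Sum.inr (Sum.inl ())) c := by
  rw [Matrix.mul_apply, Fintype.sum_sum_type]
  have hc : ∀ b : Fin 4, ((b : ℕ) = ((i : ℕ) + 1) % 4) ↔ b = j := by
    intro b; rw [← hij, Fin.ext_iff]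
  simp [Hmat, Cmat, hc, ite_mul, Finset.sum_ite_eq']

lemma rowM (u : Fin 4 → ℕ) (v : Fin 5 → ℕ)
    (B : Matrix (Fin 4 ⊕ Unit ⊕ Fin 5) (Fin 4 ⊕ Unit ⊕ Fin 5) ℕ)
    (c : Fin 4 ⊕ Unit ⊕ Fin 5) :
    (Hmat 4 5 u v * B) (Sum.inr (Sum.inl ())) c
      = ∑ b : Fin 5, v b * B (Sum.inr (Sum.inr b)) c := by
  rw [Matrix.mul_apply, Fintype.sum_sum_type]
  simp [Hmat]

lemma rowR (u : Fin 4 → ℕ) (v : Fin 5 → ℕ) (s t : Fin 5)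
    (hst : (t : ℕ) = ((s : ℕ) + 1) % 5)
    (B : Matrix (Fin 4 ⊕ Unit ⊕ Fin 5) (Fin 4 ⊕ Unit ⊕ Fin 5) ℕ)
    (c : Fin 4 ⊕ Unit ⊕ Fin 5) :
    (Hmat 4 5 u v * B) (Sum.inr (Sum.inr s)) c
      = B (Sum.inr (Sum.inr t)) c := by
  rw [Matrix.mul_apply, Fintype.sum_sum_type]
  have hc : ∀ b : Fin 5, ((b : ℕ) = ((s : ℕ) + 1) % 5) ↔ b = t := by
    intro b; rw [← hst, Fin.ext_iff]
  simp [Hmat, Cmat, hc, ite_mul, Finset.sum_ite_eq']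

lemma hR (u : Fin 4 → ℕ) (v : Fin 5 → ℕ) : ∀ (k : ℕ) (s : Fin 5),
    ((Hmat 4 5 u v) ^ k) (Sum.inr (Sum.inr s)) (Sum.inr (Sum.inr (0 : Fin 5)))
      = if ((s : ℕ) + k) % 5 = 0 then 1 else 0 := by
  intro k
  induction k with
  | zero =>
      intro s
      rw [pow_zero, Matrix.one_apply]
      have h5 : ((s : ℕ) + 0) % 5 = (s : ℕ) := by omega
      rw [h5]
      by_cases h : s = 0
      · subst h; simp
      · rw [if_neg (by simpa using h), if_neg (by
          intro hc; exact h (Fin.ext (by simpa using hc)))]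
  | succ k ih =>
      intro s
      rw [pow_succ', rowR u v s (s + 1) (by rw [Fin.val_add]; norm_num), ih]
      have h5 : (((s + 1 : Fin 5) : ℕ) + k) % 5 = ((s : ℕ) + (k + 1)) % 5 := by
        rw [Fin.val_add]; norm_num; omega
      rw [h5]

theorem stmt_17 (u : Fin 4 → ℕ) (v : Fin 5 → ℕ)
    (hu1 : ∀ a, u a ≤ 1) (hv1 : ∀ b, v b ≤ 1)
    (hu0 : u ≠ 0) (hv0 : v ≠ 0)
    (hmulti : (∃ a b : Fin 4, a ≠ b ∧ u a ≠ 0 ∧ u b ≠ 0) ∨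
              (∃ a b : Fin 5, a ≠ b ∧ v a ≠ 0 ∧ v b ≠ 0)) :
    (∃ i j, 1 < ((Hmat 4 5 u v) ^ 21) i j) ∧
    theta (Hmat 4 5 u v) ≤ (20 : ℕ∞) ∧ 20 < g 10 := by
  have M1 : ((Hmat 4 5 u v) ^ (1)) (Sum.inr (Sum.inl ())) (Sum.inr (Sum.inr (0 : Fin 5))) = v 0 := by
    rw [show (Hmat 4 5 u v) ^ (1:ℕ) = Hmat 4 5 u v * (Hmat 4 5 u v) ^ (0:ℕ) from pow_succ' _ 0,
      rowM, Fin.sum_univ_five]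
    simp only [hR]
    norm_num [show ((3:Fin 5):ℕ) = 3 from rfl, show ((4:Fin 5):ℕ) = 4 from rfl]
  have M2 : ((Hmat 4 5 u v) ^ (2)) (Sum.inr (Sum.inl ())) (Sum.inr (Sum.inr (0 : Fin 5))) = v 4 := by
    rw [show (Hmat 4 5 u v) ^ (2:ℕ) = Hmat 4 5 u v * (Hmat 4 5 u v) ^ (1:ℕ) from pow_succ' _ 1,
      rowM, Fin.sum_univ_five]
    simp only [hR]
    norm_num [show ((3:Fin 5):ℕ) = 3 from rfl, show ((4:Fin 5):ℕ) = 4 from rfl]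
  have M3 : ((Hmat 4 5 u v) ^ (3)) (Sum.inr (Sum.inl ())) (Sum.inr (Sum.inr (0 : Fin 5))) = v 3 := by
    rw [show (Hmat 4 5 u v) ^ (3:ℕ) = Hmat 4 5 u v * (Hmat 4 5 u v) ^ (2:ℕ) from pow_succ' _ 2,
      rowM, Fin.sum_univ_five]
    simp only [hR]
    norm_num [show ((3:Fin 5):ℕ) = 3 from rfl, show ((4:Fin 5):ℕ) = 4 from rfl]
  have M4 : ((Hmat 4 5 u v) ^ (4)) (Sum.inr (Sum.inl ())) (Sum.inr (Sum.inr (0 : Fin 5))) = v 2 := by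
    rw [show (Hmat 4 5 u v) ^ (4:ℕ) = Hmat 4 5 u v * (Hmat 4 5 u v) ^ (3:ℕ) from pow_succ' _ 3,
      rowM, Fin.sum_univ_five]
    simp only [hR]
    norm_num [show ((3:Fin 5):ℕ) = 3 from rfl, show ((4:Fin 5):ℕ) = 4 from rfl]
  have M5 : ((Hmat 4 5 u v) ^ (5)) (Sum.inr (Sum.inl ())) (Sum.inr (Sum.inr (0 : Fin 5))) = v 1 := by
    rw [show (Hmat 4 5 u v) ^ (5:ℕ) = Hmat 4 5 u v * (Hmat 4 5 u v) ^ (4:ℕ) from pow_succ' _ 4,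
      rowM, Fin.sum_univ_five]
    simp only [hR]
    norm_num [show ((3:Fin 5):ℕ) = 3 from rfl, show ((4:Fin 5):ℕ) = 4 from rfl]
  have M6 : ((Hmat 4 5 u v) ^ (6)) (Sum.inr (Sum.inl ())) (Sum.inr (Sum.inr (0 : Fin 5))) = v 0 := by
    rw [show (Hmat 4 5 u v) ^ (6:ℕ) = Hmat 4 5 u v * (Hmat 4 5 u v) ^ (5:ℕ) from pow_succ' _ 5,
      rowM, Fin.sum_univ_five]
    simp only [hR]
    norm_num [show ((3:Fin 5):ℕ) = 3 from rfl, show ((4:Fin 5):ℕ) = 4 from rfl]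
  have M7 : ((Hmat 4 5 u v) ^ (7)) (Sum.inr (Sum.inl ())) (Sum.inr (Sum.inr (0 : Fin 5))) = v 4 := by
    rw [show (Hmat 4 5 u v) ^ (7:ℕ) = Hmat 4 5 u v * (Hmat 4 5 u v) ^ (6:ℕ) from pow_succ' _ 6,
      rowM, Fin.sum_univ_five]
    simp only [hR]
    norm_num [show ((3:Fin 5):ℕ) = 3 from rfl, show ((4:Fin 5):ℕ) = 4 from rfl]
  have M8 : ((Hmat 4 5 u v) ^ (8)) (Sum.inr (Sum.inl ())) (Sum.inr (Sum.inr (0 : Fin 5))) = v 3 := by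
    rw [show (Hmat 4 5 u v) ^ (8:ℕ) = Hmat 4 5 u v * (Hmat 4 5 u v) ^ (7:ℕ) from pow_succ' _ 7,
      rowM, Fin.sum_univ_five]
    simp only [hR]
    norm_num [show ((3:Fin 5):ℕ) = 3 from rfl, show ((4:Fin 5):ℕ) = 4 from rfl]
  have M9 : ((Hmat 4 5 u v) ^ (9)) (Sum.inr (Sum.inl ())) (Sum.inr (Sum.inr (0 : Fin 5))) = v 2 := by
    rw [show (Hmat 4 5 u v) ^ (9:ℕ) = Hmat 4 5 u v * (Hmat 4 5 u v) ^ (8:ℕ) from pow_succ' _ 8,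
      rowM, Fin.sum_univ_five]
    simp only [hR]
    norm_num [show ((3:Fin 5):ℕ) = 3 from rfl, show ((4:Fin 5):ℕ) = 4 from rfl]
  have M10 : ((Hmat 4 5 u v) ^ (10)) (Sum.inr (Sum.inl ())) (Sum.inr (Sum.inr (0 : Fin 5))) = v 1 := by
    rw [show (Hmat 4 5 u v) ^ (10:ℕ) = Hmat 4 5 u v * (Hmat 4 5 u v) ^ (9:ℕ) from pow_succ' _ 9,
      rowM, Fin.sum_univ_five]
    simp only [hR]
    norm_num [show ((3:Fin 5):ℕ) = 3 from rfl, show ((4:Fin 5):ℕ) = 4 from rfl]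
  have M11 : ((Hmat 4 5 u v) ^ (11)) (Sum.inr (Sum.inl ())) (Sum.inr (Sum.inr (0 : Fin 5))) = v 0 := by
    rw [show (Hmat 4 5 u v) ^ (11:ℕ) = Hmat 4 5 u v * (Hmat 4 5 u v) ^ (10:ℕ) from pow_succ' _ 10,
      rowM, Fin.sum_univ_five]
    simp only [hR]
    norm_num [show ((3:Fin 5):ℕ) = 3 from rfl, show ((4:Fin 5):ℕ) = 4 from rfl]
  have M12 : ((Hmat 4 5 u v) ^ (12)) (Sum.inr (Sum.inl ())) (Sum.inr (Sum.inr (0 : Fin 5))) = v 4 := by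
    rw [show (Hmat 4 5 u v) ^ (12:ℕ) = Hmat 4 5 u v * (Hmat 4 5 u v) ^ (11:ℕ) from pow_succ' _ 11,
      rowM, Fin.sum_univ_five]
    simp only [hR]
    norm_num [show ((3:Fin 5):ℕ) = 3 from rfl, show ((4:Fin 5):ℕ) = 4 from rfl]
  have M13 : ((Hmat 4 5 u v) ^ (13)) (Sum.inr (Sum.inl ())) (Sum.inr (Sum.inr (0 : Fin 5))) = v 3 := by
    rw [show (Hmat 4 5 u v) ^ (13:ℕ) = Hmat 4 5 u v * (Hmat 4 5 u v) ^ (12:ℕ) from pow_succ' _ 12,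
      rowM, Fin.sum_univ_five]
    simp only [hR]
    norm_num [show ((3:Fin 5):ℕ) = 3 from rfl, show ((4:Fin 5):ℕ) = 4 from rfl]
  have M14 : ((Hmat 4 5 u v) ^ (14)) (Sum.inr (Sum.inl ())) (Sum.inr (Sum.inr (0 : Fin 5))) = v 2 := by
    rw [show (Hmat 4 5 u v) ^ (14:ℕ) = Hmat 4 5 u v * (Hmat 4 5 u v) ^ (13:ℕ) from pow_succ' _ 13,
      rowM, Fin.sum_univ_five]
    simp only [hR]
    norm_num [show ((3:Fin 5):ℕ) = 3 from rfl, show ((4:Fin 5):ℕ) = 4 from rfl]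
  have M15 : ((Hmat 4 5 u v) ^ (15)) (Sum.inr (Sum.inl ())) (Sum.inr (Sum.inr (0 : Fin 5))) = v 1 := by
    rw [show (Hmat 4 5 u v) ^ (15:ℕ) = Hmat 4 5 u v * (Hmat 4 5 u v) ^ (14:ℕ) from pow_succ' _ 14,
      rowM, Fin.sum_univ_five]
    simp only [hR]
    norm_num [show ((3:Fin 5):ℕ) = 3 from rfl, show ((4:Fin 5):ℕ) = 4 from rfl]
  have M16 : ((Hmat 4 5 u v) ^ (16)) (Sum.inr (Sum.inl ())) (Sum.inr (Sum.inr (0 : Fin 5))) = v 0 := by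
    rw [show (Hmat 4 5 u v) ^ (16:ℕ) = Hmat 4 5 u v * (Hmat 4 5 u v) ^ (15:ℕ) from pow_succ' _ 15,
      rowM, Fin.sum_univ_five]
    simp only [hR]
    norm_num [show ((3:Fin 5):ℕ) = 3 from rfl, show ((4:Fin 5):ℕ) = 4 from rfl]
  have M17 : ((Hmat 4 5 u v) ^ (17)) (Sum.inr (Sum.inl ())) (Sum.inr (Sum.inr (0 : Fin 5))) = v 4 := by
    rw [show (Hmat 4 5 u v) ^ (17:ℕ) = Hmat 4 5 u v * (Hmat 4 5 u v) ^ (16:ℕ) from pow_succ' _ 16,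
      rowM, Fin.sum_univ_five]
    simp only [hR]
    norm_num [show ((3:Fin 5):ℕ) = 3 from rfl, show ((4:Fin 5):ℕ) = 4 from rfl]
  have M18 : ((Hmat 4 5 u v) ^ (18)) (Sum.inr (Sum.inl ())) (Sum.inr (Sum.inr (0 : Fin 5))) = v 3 := by
    rw [show (Hmat 4 5 u v) ^ (18:ℕ) = Hmat 4 5 u v * (Hmat 4 5 u v) ^ (17:ℕ) from pow_succ' _ 17,
      rowM, Fin.sum_univ_five]
    simp only [hR]
    norm_num [show ((3:Fin 5):ℕ) = 3 from rfl, show ((4:Fin 5):ℕ) = 4 from rfl]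
  have M19 : ((Hmat 4 5 u v) ^ (19)) (Sum.inr (Sum.inl ())) (Sum.inr (Sum.inr (0 : Fin 5))) = v 2 := by
    rw [show (Hmat 4 5 u v) ^ (19:ℕ) = Hmat 4 5 u v * (Hmat 4 5 u v) ^ (18:ℕ) from pow_succ' _ 18,
      rowM, Fin.sum_univ_five]
    simp only [hR]
    norm_num [show ((3:Fin 5):ℕ) = 3 from rfl, show ((4:Fin 5):ℕ) = 4 from rfl]
  have M20 : ((Hmat 4 5 u v) ^ (20)) (Sum.inr (Sum.inl ())) (Sum.inr (Sum.inr (0 : Fin 5))) = v 1 := by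
    rw [show (Hmat 4 5 u v) ^ (20:ℕ) = Hmat 4 5 u v * (Hmat 4 5 u v) ^ (19:ℕ) from pow_succ' _ 19,
      rowM, Fin.sum_univ_five]
    simp only [hR]
    norm_num [show ((3:Fin 5):ℕ) = 3 from rfl, show ((4:Fin 5):ℕ) = 4 from rfl]
  have P1 : ((Hmat 4 5 u v) ^ (1)) (Sum.inl (0 : Fin 4)) (Sum.inr (Sum.inr (0 : Fin 5))) = 0 := by
    rw [pow_one]; rfl
  have P2 : ((Hmat 4 5 u v) ^ (2)) (Sum.inl (3 : Fin 4)) (Sum.inr (Sum.inr (0 : Fin 5))) = 0 + u 3 * v 0 := by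
    rw [show (Hmat 4 5 u v) ^ (2:ℕ) = Hmat 4 5 u v * (Hmat 4 5 u v) ^ (1:ℕ) from pow_succ' _ 1,
      rowL u v 3 0 (by decide), P1, M1]
  have P3 : ((Hmat 4 5 u v) ^ (3)) (Sum.inl (2 : Fin 4)) (Sum.inr (Sum.inr (0 : Fin 5))) = 0 + u 3 * v 0 + u 2 * v 4 := by
    rw [show (Hmat 4 5 u v) ^ (3:ℕ) = Hmat 4 5 u v * (Hmat 4 5 u v) ^ (2:ℕ) from pow_succ' _ 2,
      rowL u v 2 3 (by decide), P2, M2]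
  have P4 : ((Hmat 4 5 u v) ^ (4)) (Sum.inl (1 : Fin 4)) (Sum.inr (Sum.inr (0 : Fin 5))) = 0 + u 3 * v 0 + u 2 * v 4 + u 1 * v 3 := by
    rw [show (Hmat 4 5 u v) ^ (4:ℕ) = Hmat 4 5 u v * (Hmat 4 5 u v) ^ (3:ℕ) from pow_succ' _ 3,
      rowL u v 1 2 (by decide), P3, M3]
  have P5 : ((Hmat 4 5 u v) ^ (5)) (Sum.inl (0 : Fin 4)) (Sum.inr (Sum.inr (0 : Fin 5))) = 0 + u 3 * v 0 + u 2 * v 4 + u 1 * v 3 + u 0 * v 2 := by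
    rw [show (Hmat 4 5 u v) ^ (5:ℕ) = Hmat 4 5 u v * (Hmat 4 5 u v) ^ (4:ℕ) from pow_succ' _ 4,
      rowL u v 0 1 (by decide), P4, M4]
  have P6 : ((Hmat 4 5 u v) ^ (6)) (Sum.inl (3 : Fin 4)) (Sum.inr (Sum.inr (0 : Fin 5))) = 0 + u 3 * v 0 + u 2 * v 4 + u 1 * v 3 + u 0 * v 2 + u 3 * v 1 := by
    rw [show (Hmat 4 5 u v) ^ (6:ℕ) = Hmat 4 5 u v * (Hmat 4 5 u v) ^ (5:ℕ) from pow_succ' _ 5,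
      rowL u v 3 0 (by decide), P5, M5]
  have P7 : ((Hmat 4 5 u v) ^ (7)) (Sum.inl (2 : Fin 4)) (Sum.inr (Sum.inr (0 : Fin 5))) = 0 + u 3 * v 0 + u 2 * v 4 + u 1 * v 3 + u 0 * v 2 + u 3 * v 1 + u 2 * v 0 := by
    rw [show (Hmat 4 5 u v) ^ (7:ℕ) = Hmat 4 5 u v * (Hmat 4 5 u v) ^ (6:ℕ) from pow_succ' _ 6,
      rowL u v 2 3 (by decide), P6, M6]
  have P8 : ((Hmat 4 5 u v) ^ (8)) (Sum.inl (1 : Fin 4)) (Sum.inr (Sum.inr (0 : Fin 5))) = 0 + u 3 * v 0 + u 2 * v 4 + u 1 * v 3 + u 0 * v 2 + u 3 * v 1 + u 2 * v 0 + u 1 * v 4 := by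
    rw [show (Hmat 4 5 u v) ^ (8:ℕ) = Hmat 4 5 u v * (Hmat 4 5 u v) ^ (7:ℕ) from pow_succ' _ 7,
      rowL u v 1 2 (by decide), P7, M7]
  have P9 : ((Hmat 4 5 u v) ^ (9)) (Sum.inl (0 : Fin 4)) (Sum.inr (Sum.inr (0 : Fin 5))) = 0 + u 3 * v 0 + u 2 * v 4 + u 1 * v 3 + u 0 * v 2 + u 3 * v 1 + u 2 * v 0 + u 1 * v 4 + u 0 * v 3 := by
    rw [show (Hmat 4 5 u v) ^ (9:ℕ) = Hmat 4 5 u v * (Hmat 4 5 u v) ^ (8:ℕ) from pow_succ' _ 8,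
      rowL u v 0 1 (by decide), P8, M8]
  have P10 : ((Hmat 4 5 u v) ^ (10)) (Sum.inl (3 : Fin 4)) (Sum.inr (Sum.inr (0 : Fin 5))) = 0 + u 3 * v 0 + u 2 * v 4 + u 1 * v 3 + u 0 * v 2 + u 3 * v 1 + u 2 * v 0 + u 1 * v 4 + u 0 * v 3 + u 3 * v 2 := by
    rw [show (Hmat 4 5 u v) ^ (10:ℕ) = Hmat 4 5 u v * (Hmat 4 5 u v) ^ (9:ℕ) from pow_succ' _ 9,
      rowL u v 3 0 (by decide), P9, M9]
  have P11 : ((Hmat 4 5 u v) ^ (11)) (Sum.inl (2 : Fin 4)) (Sum.inr (Sum.inr (0 : Fin 5))) = 0 + u 3 * v 0 + u 2 * v 4 + u 1 * v 3 + u 0 * v 2 + u 3 * v 1 + u 2 * v 0 + u 1 * v 4 + u 0 * v 3 + u 3 * v 2 + u 2 * v 1 := by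
    rw [show (Hmat 4 5 u v) ^ (11:ℕ) = Hmat 4 5 u v * (Hmat 4 5 u v) ^ (10:ℕ) from pow_succ' _ 10,
      rowL u v 2 3 (by decide), P10, M10]
  have P12 : ((Hmat 4 5 u v) ^ (12)) (Sum.inl (1 : Fin 4)) (Sum.inr (Sum.inr (0 : Fin 5))) = 0 + u 3 * v 0 + u 2 * v 4 + u 1 * v 3 + u 0 * v 2 + u 3 * v 1 + u 2 * v 0 + u 1 * v 4 + u 0 * v 3 + u 3 * v 2 + u 2 * v 1 + u 1 * v 0 := by
    rw [show (Hmat 4 5 u v) ^ (12:ℕ) = Hmat 4 5 u v * (Hmat 4 5 u v) ^ (11:ℕ) from pow_succ' _ 11,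
      rowL u v 1 2 (by decide), P11, M11]
  have P13 : ((Hmat 4 5 u v) ^ (13)) (Sum.inl (0 : Fin 4)) (Sum.inr (Sum.inr (0 : Fin 5))) = 0 + u 3 * v 0 + u 2 * v 4 + u 1 * v 3 + u 0 * v 2 + u 3 * v 1 + u 2 * v 0 + u 1 * v 4 + u 0 * v 3 + u 3 * v 2 + u 2 * v 1 + u 1 * v 0 + u 0 * v 4 := by
    rw [show (Hmat 4 5 u v) ^ (13:ℕ) = Hmat 4 5 u v * (Hmat 4 5 u v) ^ (12:ℕ) from pow_succ' _ 12,
      rowL u v 0 1 (by decide), P12, M12]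
  have P14 : ((Hmat 4 5 u v) ^ (14)) (Sum.inl (3 : Fin 4)) (Sum.inr (Sum.inr (0 : Fin 5))) = 0 + u 3 * v 0 + u 2 * v 4 + u 1 * v 3 + u 0 * v 2 + u 3 * v 1 + u 2 * v 0 + u 1 * v 4 + u 0 * v 3 + u 3 * v 2 + u 2 * v 1 + u 1 * v 0 + u 0 * v 4 + u 3 * v 3 := by
    rw [show (Hmat 4 5 u v) ^ (14:ℕ) = Hmat 4 5 u v * (Hmat 4 5 u v) ^ (13:ℕ) from pow_succ' _ 13,
      rowL u v 3 0 (by decide), P13, M13]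
  have P15 : ((Hmat 4 5 u v) ^ (15)) (Sum.inl (2 : Fin 4)) (Sum.inr (Sum.inr (0 : Fin 5))) = 0 + u 3 * v 0 + u 2 * v 4 + u 1 * v 3 + u 0 * v 2 + u 3 * v 1 + u 2 * v 0 + u 1 * v 4 + u 0 * v 3 + u 3 * v 2 + u 2 * v 1 + u 1 * v 0 + u 0 * v 4 + u 3 * v 3 + u 2 * v 2 := by
    rw [show (Hmat 4 5 u v) ^ (15:ℕ) = Hmat 4 5 u v * (Hmat 4 5 u v) ^ (14:ℕ) from pow_succ' _ 14,
      rowL u v 2 3 (by decide), P14, M14]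
  have P16 : ((Hmat 4 5 u v) ^ (16)) (Sum.inl (1 : Fin 4)) (Sum.inr (Sum.inr (0 : Fin 5))) = 0 + u 3 * v 0 + u 2 * v 4 + u 1 * v 3 + u 0 * v 2 + u 3 * v 1 + u 2 * v 0 + u 1 * v 4 + u 0 * v 3 + u 3 * v 2 + u 2 * v 1 + u 1 * v 0 + u 0 * v 4 + u 3 * v 3 + u 2 * v 2 + u 1 * v 1 := by
    rw [show (Hmat 4 5 u v) ^ (16:ℕ) = Hmat 4 5 u v * (Hmat 4 5 u v) ^ (15:ℕ) from pow_succ' _ 15,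
      rowL u v 1 2 (by decide), P15, M15]
  have P17 : ((Hmat 4 5 u v) ^ (17)) (Sum.inl (0 : Fin 4)) (Sum.inr (Sum.inr (0 : Fin 5))) = 0 + u 3 * v 0 + u 2 * v 4 + u 1 * v 3 + u 0 * v 2 + u 3 * v 1 + u 2 * v 0 + u 1 * v 4 + u 0 * v 3 + u 3 * v 2 + u 2 * v 1 + u 1 * v 0 + u 0 * v 4 + u 3 * v 3 + u 2 * v 2 + u 1 * v 1 + u 0 * v 0 := by
    rw [show (Hmat 4 5 u v) ^ (17:ℕ) = Hmat 4 5 u v * (Hmat 4 5 u v) ^ (16:ℕ) from pow_succ' _ 16,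
      rowL u v 0 1 (by decide), P16, M16]
  have P18 : ((Hmat 4 5 u v) ^ (18)) (Sum.inl (3 : Fin 4)) (Sum.inr (Sum.inr (0 : Fin 5))) = 0 + u 3 * v 0 + u 2 * v 4 + u 1 * v 3 + u 0 * v 2 + u 3 * v 1 + u 2 * v 0 + u 1 * v 4 + u 0 * v 3 + u 3 * v 2 + u 2 * v 1 + u 1 * v 0 + u 0 * v 4 + u 3 * v 3 + u 2 * v 2 + u 1 * v 1 + u 0 * v 0 + u 3 * v 4 := by
    rw [show (Hmat 4 5 u v) ^ (18:ℕ) = Hmat 4 5 u v * (Hmat 4 5 u v) ^ (17:ℕ) from pow_succ' _ 17,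
      rowL u v 3 0 (by decide), P17, M17]
  have P19 : ((Hmat 4 5 u v) ^ (19)) (Sum.inl (2 : Fin 4)) (Sum.inr (Sum.inr (0 : Fin 5))) = 0 + u 3 * v 0 + u 2 * v 4 + u 1 * v 3 + u 0 * v 2 + u 3 * v 1 + u 2 * v 0 + u 1 * v 4 + u 0 * v 3 + u 3 * v 2 + u 2 * v 1 + u 1 * v 0 + u 0 * v 4 + u 3 * v 3 + u 2 * v 2 + u 1 * v 1 + u 0 * v 0 + u 3 * v 4 + u 2 * v 3 := by
    rw [show (Hmat 4 5 u v) ^ (19:ℕ) = Hmat 4 5 u v * (Hmat 4 5 u v) ^ (18:ℕ) from pow_succ' _ 18,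
      rowL u v 2 3 (by decide), P18, M18]
  have P20 : ((Hmat 4 5 u v) ^ (20)) (Sum.inl (1 : Fin 4)) (Sum.inr (Sum.inr (0 : Fin 5))) = 0 + u 3 * v 0 + u 2 * v 4 + u 1 * v 3 + u 0 * v 2 + u 3 * v 1 + u 2 * v 0 + u 1 * v 4 + u 0 * v 3 + u 3 * v 2 + u 2 * v 1 + u 1 * v 0 + u 0 * v 4 + u 3 * v 3 + u 2 * v 2 + u 1 * v 1 + u 0 * v 0 + u 3 * v 4 + u 2 * v 3 + u 1 * v 2 := by
    rw [show (Hmat 4 5 u v) ^ (20:ℕ) = Hmat 4 5 u v * (Hmat 4 5 u v) ^ (19:ℕ) from pow_succ' _ 19,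
      rowL u v 1 2 (by decide), P19, M19]
  have P21 : ((Hmat 4 5 u v) ^ (21)) (Sum.inl (0 : Fin 4)) (Sum.inr (Sum.inr (0 : Fin 5))) = 0 + u 3 * v 0 + u 2 * v 4 + u 1 * v 3 + u 0 * v 2 + u 3 * v 1 + u 2 * v 0 + u 1 * v 4 + u 0 * v 3 + u 3 * v 2 + u 2 * v 1 + u 1 * v 0 + u 0 * v 4 + u 3 * v 3 + u 2 * v 2 + u 1 * v 1 + u 0 * v 0 + u 3 * v 4 + u 2 * v 3 + u 1 * v 2 + u 0 * v 1 := by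
    rw [show (Hmat 4 5 u v) ^ (21:ℕ) = Hmat 4 5 u v * (Hmat 4 5 u v) ^ (20:ℕ) from pow_succ' _ 20,
      rowL u v 0 1 (by decide), P20, M20]
  have key : ((Hmat 4 5 u v) ^ 21) (Sum.inl (0 : Fin 4)) (Sum.inr (Sum.inr (0 : Fin 5)))
      = (∑ x : Fin 4, u x) * (∑ y : Fin 5, v y) := by
    rw [P21, Fin.sum_univ_four, Fin.sum_univ_five]; ring
  obtain ⟨a0, ha0⟩ : ∃ a, u a ≠ 0 := by
    by_contra h; push_neg at h; exact hu0 (funext fun a => h a)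
  obtain ⟨b0, hb0⟩ : ∃ b, v b ≠ 0 := by
    by_contra h; push_neg at h; exact hv0 (funext fun b => h b)
  have hS1 : 1 ≤ ∑ x : Fin 4, u x :=
    le_trans (Nat.one_le_iff_ne_zero.mpr ha0)
      (Finset.single_le_sum (fun i _ => Nat.zero_le _) (Finset.mem_univ a0))
  have hT1 : 1 ≤ ∑ y : Fin 5, v y :=
    le_trans (Nat.one_le_iff_ne_zero.mpr hb0)
      (Finset.single_le_sum (fun i _ => Nat.zero_le _) (Finset.mem_univ b0))
  have hgt : 1 < ((Hmat 4 5 u v) ^ 21) (Sum.inl (0 : Fin 4)) (Sum.inr (Sum.inr (0 : Fin 5))) := by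
    rw [key]
    rcases hmulti with ⟨a, b, hab, ha, hb⟩ | ⟨a, b, hab, ha, hb⟩
    · have hS2 : 2 ≤ ∑ x : Fin 4, u x := by
        calc 2 ≤ u a + u b := by omega
          _ = ∑ x ∈ ({a, b} : Finset (Fin 4)), u x := (Finset.sum_pair hab).symm
          _ ≤ ∑ x : Fin 4, u x :=
            Finset.sum_le_sum_of_subset (Finset.subset_univ _)
      calc 1 < 2 * 1 := by norm_num
        _ ≤ (∑ x : Fin 4, u x) * (∑ y : Fin 5, v y) := Nat.mul_le_mul hS2 hT1
    · have hT2 : 2 ≤ ∑ y : Fin 5, v y := by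
        calc 2 ≤ v a + v b := by omega
          _ = ∑ y ∈ ({a, b} : Finset (Fin 5)), v y := (Finset.sum_pair hab).symm
          _ ≤ ∑ y : Fin 5, v y :=
            Finset.sum_le_sum_of_subset (Finset.subset_univ _)
      calc 1 < 1 * 2 := by norm_num
        _ ≤ (∑ x : Fin 4, u x) * (∑ y : Fin 5, v y) := Nat.mul_le_mul hS1 hT2
  refine ⟨⟨_, _, hgt⟩, ?_, by decide⟩
  apply sInf_le
  refine ⟨20, ⟨by norm_num, fun hZO => ?_⟩, rfl⟩
  have h1 := hZO (Sum.inl (0 : Fin 4)) (Sum.inr (Sum.inr (0 : Fin 5)))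
  have h2 : ((Hmat 4 5 u v) ^ (20 + 1)) = ((Hmat 4 5 u v) ^ 21) := by norm_num
  rw [h2] at h1
  omega
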